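/- Let (E, Λ, p) be a locally Hilbert space model and let T ∈ 𝓛(E). Then ⟨T x, y⟩ = ⟨x, T y⟩ holds for all x, y ∈ E if and only if for every λ ∈ Λ the restriction T_λ : p λ → p λ is a self-adjoint bounded operator on the Hilbert space p λ. -/

import Mathlib

open scoped InnerProductSpace

/-- The orthogonal projection of an inner product space onto a complete submodule,
viewed as a continuous linear map of the ambient space into itself. -/
noncomputable def projL {E : Type*} [NormedAddCommGroup E] [InnerProductSpace ℂ E]
    (K : Submodule ℂ E) [CompleteSpace K] : E →L[ℂ] E :=
  K.subtypeL.comp K.orthogonalProjectionOnto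

/-- An element of `𝓛(E)` for the locally Hilbert space model determined by the family `p`:
a linear map on `E` leaving each `p l` invariant, whose restriction to each `p l` is a
continuous (bounded) operator, and which commutes with each orthogonal projection `projL (p l)`. -/
structure LocOp {E : Type*} [NormedAddCommGroup E] [InnerProductSpace ℂ E]
    {Λ : Type*} (p : Λ → Submodule ℂ E) [∀ l, CompleteSpace (p l)] where
  toFun : E →ₗ[ℂ] E
  restr : ∀ l, p l →L[ℂ] p l
  restr_eq : ∀ l (x : p l), (restr l x : E) = toFun x
  proj_comm : ∀ l (x : E), toFun (projL (p l) x) = projL (p l) (toFun x)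

/-- **Proposition 2.1 (i).**  An operator `T ∈ 𝓛(E)` on a locally Hilbert space model
`(E, Λ, p)` is locally self-adjoint (`⟪T x, y⟫ = ⟪x, T y⟫` for all `x, y ∈ E`) iff each
restriction `T_λ : p λ → p λ` is a self-adjoint bounded operator on the Hilbert space `p λ`. -/
theorem locOp_selfAdjoint_iff
    {E : Type*} [NormedAddCommGroup E] [InnerProductSpace ℂ E]
    {Λ : Type*} [PartialOrder Λ] [IsDirected Λ (· ≤ ·)]
    (p : Λ → Submodule ℂ E) [∀ l, CompleteSpace (p l)]
    (hmono : Monotone p) (hexh : ∀ x : E, ∃ l, x ∈ p l)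
    (T : LocOp p) :
    (∀ x y : E, ⟪T.toFun x, y⟫_ℂ = ⟪x, T.toFun y⟫_ℂ) ↔
      ∀ l, IsSelfAdjoint (T.restr l) := by
  constructor
  · intro h l
    rw [ContinuousLinearMap.isSelfAdjoint_iff_isSymmetric]
    intro x y
    have hx := T.restr_eq l x
    have hy := T.restr_eq l y
    simp only [Submodule.coe_inner, ContinuousLinearMap.coe_coe]
    rw [hx, hy]
    exact h x y
  · intro h x y
    obtain ⟨l, hl⟩ := hexh x
    obtain ⟨m, hm⟩ := hexh y
    obtain ⟨n, hln, hmn⟩ := directed_of (· ≤ ·) l m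
    have hx : x ∈ p n := hmono hln hl
    have hy : y ∈ p n := hmono hmn hm
    have hsym := ((ContinuousLinearMap.isSelfAdjoint_iff_isSymmetric).1 (h n)) ⟨x, hx⟩ ⟨y, hy⟩
    simp only [Submodule.coe_inner, ContinuousLinearMap.coe_coe] at hsym
    rwa [T.restr_eq n ⟨x, hx⟩, T.restr_eq n ⟨y, hy⟩] at hsym
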